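/- Let M₂ = ξ + η where ξ ∼ NB(r, p̄) and η ∼ Poisson(λ) are independent, q̄ = 1−p̄. Then for every bounded g : ℕ → ℝ, E[ q̄·(r + λp̄/q̄ + M₂)·g(M₂+1) − M₂·g(M₂) − λq̄·(g(M₂+2) − g(M₂+1)) ] = 0. -/

import Mathlib

open scoped BigOperators

/-- The pmf of the negative binomial distribution `NB(r, p̄)`. -/
noncomputable def nbPMF (r p : ℝ) (k : ℕ) : ℝ :=
  Real.Gamma (r + k) / ((k.factorial : ℝ) * Real.Gamma r) * p ^ (r : ℝ) * (1 - p) ^ k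

/-- The pmf of the Poisson distribution with mean `λ`. -/
noncomputable def poisPMF (lam : ℝ) (k : ℕ) : ℝ :=
  Real.exp (-lam) * lam ^ k / (k.factorial : ℝ)

/-- The pmf of `M₂ = ξ + η`, the independent sum of `NB(r, p̄)` and `Poisson(λ)`. -/
noncomputable def nbPoisPMF (r p lam : ℝ) (k : ℕ) : ℝ :=
  ∑ i ∈ Finset.range (k + 1), nbPMF r p i * poisPMF lam (k - i)

lemma nb_pos {r p : ℝ} (hr : 0 < r) (hp0 : 0 < p) (hp1 : p < 1) (i : ℕ) :
    0 < nbPMF r p i := by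
  have h1 : (0:ℝ) < Real.Gamma (r + i) := Real.Gamma_pos_of_pos (add_pos_of_pos_of_nonneg hr (Nat.cast_nonneg i))
  have h2 : (0:ℝ) < Real.Gamma r := Real.Gamma_pos_of_pos hr
  have h3 : (0:ℝ) < (i.factorial : ℝ) := by exact_mod_cast i.factorial_pos
  have h4 : (0:ℝ) < p ^ (r : ℝ) := Real.rpow_pos_of_pos hp0 r
  have h5 : (0:ℝ) < (1 - p) ^ i := pow_pos (by linarith) i
  unfold nbPMF
  exact mul_pos (mul_pos (div_pos h1 (mul_pos h3 h2)) h4) h5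

lemma pois_pos {lam : ℝ} (hlam : 0 < lam) (k : ℕ) : 0 < poisPMF lam k := by
  have h3 : (0:ℝ) < (k.factorial : ℝ) := by exact_mod_cast k.factorial_pos
  unfold poisPMF; positivity

lemma nb_rec {r p : ℝ} (hr : 0 < r) (i : ℕ) :
    ((i:ℝ) + 1) * nbPMF r p (i+1) = (1 - p) * (r + i) * nbPMF r p i := by
  unfold nbPMF
  have h1 : r + ((i:ℕ)+1 : ℕ) = (r + i) + 1 := by push_cast; ring
  rw [h1, Real.Gamma_add_one (add_pos_of_pos_of_nonneg hr (Nat.cast_nonneg i)).ne']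
  have h2 : ((i+1).factorial : ℝ) = ((i:ℝ)+1) * (i.factorial : ℝ) := by
    rw [Nat.factorial_succ]; push_cast; ring
  rw [h2]
  have h3 : (i.factorial : ℝ) ≠ 0 := by exact_mod_cast i.factorial_pos.ne'
  have h4 : Real.Gamma r ≠ 0 := (Real.Gamma_pos_of_pos hr).ne'
  have h5 : ((i:ℝ)+1) ≠ 0 := by positivity
  field_simp
  ring

lemma pois_rec {lam : ℝ} (j : ℕ) :
    ((j:ℝ) + 1) * poisPMF lam (j+1) = lam * poisPMF lam j := by
  unfold poisPMF
  have h2 : ((j+1).factorial : ℝ) = ((j:ℝ)+1) * (j.factorial : ℝ) := by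
    rw [Nat.factorial_succ]; push_cast; ring
  have h3 : (j.factorial : ℝ) ≠ 0 := by exact_mod_cast j.factorial_pos.ne'
  have h5 : ((j:ℝ)+1) ≠ 0 := by positivity
  rw [h2]
  field_simp
  ring

lemma conv_shift {r p lam : ℝ} (m : ℕ) :
    ∑ i ∈ Finset.range (m+2), ((m+1-i : ℕ):ℝ) * (nbPMF r p i * poisPMF lam (m+1-i))
      = lam * nbPoisPMF r p lam m := by
  rw [Finset.sum_range_succ]
  have h0 : m + 1 - (m+1) = 0 := by omega
  rw [h0]
  simp only [Nat.cast_zero, zero_mul, add_zero]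
  rw [nbPoisPMF, Finset.mul_sum]
  refine Finset.sum_congr rfl fun i hi => ?_
  have hi' : i ≤ m := by simpa [Nat.lt_succ_iff] using hi
  have h1 : m + 1 - i = (m - i) + 1 := by omega
  rw [h1]
  have := pois_rec (lam := lam) (m - i)
  push_cast
  linear_combination nbPMF r p i * this

lemma conv_shift' {r p lam : ℝ} (hr : 0 < r) (m : ℕ) :
    ∑ i ∈ Finset.range (m+2), (i:ℝ) * (nbPMF r p i * poisPMF lam (m+1-i))
      = (1-p) * ∑ i ∈ Finset.range (m+1), (r + (i:ℝ)) * (nbPMF r p i * poisPMF lam (m-i)) := by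
  rw [Finset.sum_range_succ']
  simp only [Nat.cast_zero, zero_mul, add_zero]
  rw [Finset.mul_sum]
  refine Finset.sum_congr rfl fun i hi => ?_
  have h1 : m + 1 - (i + 1) = m - i := by omega
  rw [h1]
  have := nb_rec (p := p) hr i
  push_cast
  linear_combination poisPMF lam (m - i) * this

lemma mu_rec {r p lam : ℝ} (hr : 0 < r) (N : ℕ) :
    ((N:ℝ) + 1) * nbPoisPMF r p lam (N+1)
      = ((1-p)*(r+N) + lam) * nbPoisPMF r p lam N
        - lam*(1-p) * (if N = 0 then 0 else nbPoisPMF r p lam (N-1)) := by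
  rcases N with _ | k
  · -- N = 0
    norm_num [nbPoisPMF, Finset.sum_range_succ]
    have e1 := pois_rec (lam := lam) 0
    have e2 := nb_rec (p := p) hr 0
    norm_num at e1 e2
    linear_combination poisPMF lam 0 * e2 + nbPMF r p 0 * e1
  · -- N = k+1
    simp only [Nat.succ_ne_zero, if_false, Nat.succ_sub_one]
    have expand : ((k:ℝ)+1+1) * nbPoisPMF r p lam (k+1+1)
        = (∑ i ∈ Finset.range (k+3), (i:ℝ) * (nbPMF r p i * poisPMF lam (k+2-i)))
          + ∑ i ∈ Finset.range (k+3), ((k+2-i : ℕ):ℝ) * (nbPMF r p i * poisPMF lam (k+2-i)) := by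
      rw [nbPoisPMF, Finset.mul_sum, ← Finset.sum_add_distrib]
      refine Finset.sum_congr rfl fun i hi => ?_
      have hi' : i ≤ k + 2 := by simpa [Nat.lt_succ_iff] using hi
      have hc : ((k+2-i : ℕ):ℝ) = (k:ℝ) + 2 - i := by
        push_cast [Nat.cast_sub hi']; ring
      rw [hc]; push_cast; ring
    have s2 : ∑ i ∈ Finset.range (k+3), ((k+2-i : ℕ):ℝ) * (nbPMF r p i * poisPMF lam (k+2-i))
        = lam * nbPoisPMF r p lam (k+1) := conv_shift (k+1)
    have s1 : ∑ i ∈ Finset.range (k+3), (i:ℝ) * (nbPMF r p i * poisPMF lam (k+2-i))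
        = (1-p) * ∑ i ∈ Finset.range (k+2), (r + (i:ℝ)) * (nbPMF r p i * poisPMF lam (k+1-i)) :=
      conv_shift' hr (k+1)
    have split : ∑ i ∈ Finset.range (k+2), (r + (i:ℝ)) * (nbPMF r p i * poisPMF lam (k+1-i))
        = r * nbPoisPMF r p lam (k+1)
          + ∑ i ∈ Finset.range (k+2), (i:ℝ) * (nbPMF r p i * poisPMF lam (k+1-i)) := by
      rw [nbPoisPMF, Finset.mul_sum, ← Finset.sum_add_distrib]
      exact Finset.sum_congr rfl fun i hi => by ring
    have inner : ∑ i ∈ Finset.range (k+2), (i:ℝ) * (nbPMF r p i * poisPMF lam (k+1-i))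
        = ((k:ℝ)+1) * nbPoisPMF r p lam (k+1) - lam * nbPoisPMF r p lam k := by
      have e1 : ∑ i ∈ Finset.range (k+2), (i:ℝ) * (nbPMF r p i * poisPMF lam (k+1-i))
          = ((k:ℝ)+1) * nbPoisPMF r p lam (k+1)
            - ∑ i ∈ Finset.range (k+2), ((k+1-i : ℕ):ℝ) * (nbPMF r p i * poisPMF lam (k+1-i)) := by
        rw [nbPoisPMF, Finset.mul_sum, ← Finset.sum_sub_distrib]
        refine Finset.sum_congr rfl fun i hi => ?_
        have hi' : i ≤ k + 1 := by simpa [Nat.lt_succ_iff] using hi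
        have hc : ((k+1-i : ℕ):ℝ) = (k:ℝ) + 1 - i := by
          push_cast [Nat.cast_sub hi']; ring
        rw [hc]; ring
      rw [e1, conv_shift k]
    push_cast
    rw [expand, s2, s1, split, inner]
    ring

lemma nb_summable_aux {r p : ℝ} (hr : 0 < r) (hp0 : 0 < p) (hp1 : p < 1) :
    Summable (fun i : ℕ => ((i:ℝ)+1) * nbPMF r p i) := by
  set u : ℕ → ℝ := fun i => 1/((i:ℝ)+1) with hu
  have hu0 : Filter.Tendsto u Filter.atTop (nhds 0) := tendsto_one_div_add_atTop_nhds_zero_nat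
  set ρ : ℕ → ℝ := fun i => (1-p)*((1 + u i)*(1 + (r-1) * u i)) with hρdef
  have hρ : Filter.Tendsto ρ Filter.atTop (nhds (1-p)) := by
    have : Filter.Tendsto ρ Filter.atTop
        (nhds ((1-p)*((1 + 0)*(1 + (r-1) * 0)))) :=
      (tendsto_const_nhds.mul (((tendsto_const_nhds.add hu0)).mul
        (tendsto_const_nhds.add (tendsto_const_nhds.mul hu0))))
    simpa using this
  have hev : ∀ᶠ i in Filter.atTop, ρ i < 1 - p/2 := hρ.eventually_lt_const (by linarith)
  apply summable_of_ratio_norm_eventually_le (r := 1 - p/2) (by linarith)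
  filter_upwards [hev] with i hlt
  have hne : ((i:ℝ)+1) ≠ 0 := by positivity
  have hrec := nb_rec (p := p) hr i
  have key : ((i:ℝ)+1+1) * nbPMF r p (i+1) = ρ i * (((i:ℝ)+1) * nbPMF r p i) := by
    have expand : ρ i * (((i:ℝ)+1) * nbPMF r p i) * ((i:ℝ)+1)
        = (1-p)*(((i:ℝ)+2)*((r+(i:ℝ))* nbPMF r p i)) := by
      simp only [hρdef, hu]
      field_simp
      ring
    apply mul_right_cancel₀ hne
    rw [expand]
    linear_combination ((i:ℝ)+2) * hrec
  have hfi : (0:ℝ) < ((i:ℝ)+1) * nbPMF r p i :=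
    mul_pos (by positivity) (nb_pos hr hp0 hp1 i)
  have hfi1 : (0:ℝ) < ((i:ℝ)+1+1) * nbPMF r p (i+1) := by
    have := nb_pos hr hp0 hp1 (i+1); positivity
  rw [Real.norm_eq_abs, Real.norm_eq_abs]
  rw [abs_of_pos hfi]
  have hcast : ((((i+1:ℕ)):ℝ)+1) = (i:ℝ)+1+1 := by push_cast; ring
  rw [hcast, abs_of_pos hfi1, key]
  exact mul_le_mul_of_nonneg_right hlt.le hfi.le

lemma nb_summable {r p : ℝ} (hr : 0 < r) (hp0 : 0 < p) (hp1 : p < 1) :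
    Summable (nbPMF r p) := by
  refine Summable.of_nonneg_of_le (fun i => (nb_pos hr hp0 hp1 i).le) (fun i => ?_)
    (nb_summable_aux hr hp0 hp1)
  nlinarith [nb_pos hr hp0 hp1 i, (Nat.cast_nonneg i : (0:ℝ) ≤ i)]

lemma nb_mul_summable {r p : ℝ} (hr : 0 < r) (hp0 : 0 < p) (hp1 : p < 1) :
    Summable (fun i : ℕ => (i:ℝ) * nbPMF r p i) := by
  refine Summable.of_nonneg_of_le
    (fun i => mul_nonneg (Nat.cast_nonneg i) (nb_pos hr hp0 hp1 i).le) (fun i => ?_)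
    (nb_summable_aux hr hp0 hp1)
  nlinarith [nb_pos hr hp0 hp1 i]

lemma pois_summable {lam : ℝ} : Summable (poisPMF lam) := by
  have := (Real.summable_pow_div_factorial lam).mul_left (Real.exp (-lam))
  refine this.congr fun k => ?_
  unfold poisPMF; ring

lemma pois_mul_summable {lam : ℝ} : Summable (fun k : ℕ => (k:ℝ) * poisPMF lam k) := by
  rw [← summable_nat_add_iff 1]
  have : (fun n : ℕ => ((n+1 : ℕ):ℝ) * poisPMF lam (n+1)) = fun n => lam * poisPMF lam n := by
    funext n
    have := pois_rec (lam := lam) n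
    push_cast
    linarith [this]
  rw [this]
  exact pois_summable.mul_left lam

lemma mu_nonneg {r p lam : ℝ} (hr : 0 < r) (hp0 : 0 < p) (hp1 : p < 1) (hlam : 0 < lam)
    (k : ℕ) : 0 ≤ nbPoisPMF r p lam k :=
  Finset.sum_nonneg fun i _ => mul_nonneg (nb_pos hr hp0 hp1 i).le (pois_pos hlam _).le

lemma mu_summable {r p lam : ℝ} (hr : 0 < r) (hp0 : 0 < p) (hp1 : p < 1) :
    Summable (nbPoisPMF r p lam) := by
  have hν := nb_summable hr hp0 hp1
  have hπ := pois_summable (lam := lam)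
  have hν' : Summable fun i => ‖nbPMF r p i‖ := by
    simpa [Real.norm_eq_abs] using hν.abs
  have hπ' : Summable fun j => ‖poisPMF lam j‖ := by
    simpa [Real.norm_eq_abs] using hπ.abs
  exact summable_sum_mul_range_of_summable_norm' hν' hν hπ' hπ

lemma mu_mul_summable {r p lam : ℝ} (hr : 0 < r) (hp0 : 0 < p) (hp1 : p < 1) :
    Summable (fun k : ℕ => (k:ℝ) * nbPoisPMF r p lam k) := by
  have hν := nb_summable hr hp0 hp1
  have hπ := pois_summable (lam := lam)
  have hνm := nb_mul_summable hr hp0 hp1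
  have hπm := pois_mul_summable (lam := lam)
  have hν' : Summable fun i => ‖nbPMF r p i‖ := by
    simpa [Real.norm_eq_abs] using hν.abs
  have hπ' : Summable fun j => ‖poisPMF lam j‖ := by
    simpa [Real.norm_eq_abs] using hπ.abs
  have hνm' : Summable fun i : ℕ => ‖(i:ℝ) * nbPMF r p i‖ := by
    simpa only [Real.norm_eq_abs] using hνm.abs
  have hπm' : Summable fun j : ℕ => ‖(j:ℝ) * poisPMF lam j‖ := by
    simpa only [Real.norm_eq_abs] using hπm.abs
  have h1 := summable_sum_mul_range_of_summable_norm' hνm' hνm hπ' hπ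
  have h2 := summable_sum_mul_range_of_summable_norm' hν' hν hπm' hπm
  refine (h1.add h2).congr fun k => ?_
  rw [nbPoisPMF, Finset.mul_sum, ← Finset.sum_add_distrib]
  refine Finset.sum_congr rfl fun i hi => ?_
  have hi' : i ≤ k := by simpa [Nat.lt_succ_iff] using hi
  have hc : ((k-i : ℕ):ℝ) = (k:ℝ) - i := by push_cast [Nat.cast_sub hi']; ring
  rw [hc]
  ring

/-- Perturbed Stein identity for `M₂ = NB(r, p̄) ∗ Poisson(λ)`: for every bounded `g`,
`E[q̄ (r + λ p̄/q̄ + M₂) g(M₂+1) − M₂ g(M₂) − λ q̄ (g(M₂+2) − g(M₂+1))] = 0`,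
where `q̄ = 1 − p̄`. -/
theorem stmt_5 (r p lam : ℝ) (hr : 0 < r) (hp0 : 0 < p) (hp1 : p < 1) (hlam : 0 < lam)
    (g : ℕ → ℝ) (C : ℝ) (hg : ∀ k, |g k| ≤ C) :
    ∑' k : ℕ,
      nbPoisPMF r p lam k *
        ((1 - p) * (r + lam * p / (1 - p) + (k : ℝ)) * g (k + 1) - (k : ℝ) * g k -
          lam * (1 - p) * (g (k + 2) - g (k + 1))) = 0 := by
  have hq : (0:ℝ) < 1 - p := by linarith
  have hqne : (1:ℝ) - p ≠ 0 := hq.ne'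
  have hC : 0 ≤ C := le_trans (abs_nonneg _) (hg 0)
  have e : (1 - p) * (lam * p / (1 - p)) = lam * p := by field_simp
  have hd : (0:ℝ) ≤ lam * p / (1 - p) := div_nonneg (mul_nonneg hlam.le hp0.le) hq.le
  set μ : ℕ → ℝ := nbPoisPMF r p lam with hμdef
  set f : ℕ → ℝ := fun k =>
    nbPoisPMF r p lam k *
        ((1 - p) * (r + lam * p / (1 - p) + (k : ℝ)) * g (k + 1) - (k : ℝ) * g k -
          lam * (1 - p) * (g (k + 2) - g (k + 1))) with hfdef
  -- bounds on the inner factor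
  set a : ℝ := (1-p)*(r + lam*p/(1-p))*C + 2*lam*(1-p)*C with hadef
  set b : ℝ := (2-p)*C with hbdef
  have habs : ∀ k : ℕ, |f k| ≤ a * μ k + b * ((k:ℝ) * μ k) := by
    intro k
    have hμk := mu_nonneg hr hp0 hp1 hlam k
    have hkn : (0:ℝ) ≤ (k:ℝ) := Nat.cast_nonneg k
    have hc1 : (0:ℝ) ≤ (1-p) * (r + lam*p/(1-p) + (k:ℝ)) :=
      mul_nonneg hq.le (by linarith)
    have h1 : |(1 - p) * (r + lam * p / (1 - p) + (k : ℝ)) * g (k + 1)|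
        ≤ (1 - p) * (r + lam * p / (1 - p) + (k : ℝ)) * C := by
      rw [abs_mul, abs_of_nonneg hc1]
      exact mul_le_mul_of_nonneg_left (hg _) hc1
    have h2 : |(k:ℝ) * g k| ≤ (k:ℝ) * C := by
      rw [abs_mul, abs_of_nonneg hkn]
      exact mul_le_mul_of_nonneg_left (hg _) hkn
    have h3 : |lam * (1 - p) * (g (k + 2) - g (k + 1))| ≤ lam * (1-p) * (2*C) := by
      rw [abs_mul, abs_of_nonneg (by positivity : (0:ℝ) ≤ lam * (1-p))]
      refine mul_le_mul_of_nonneg_left ?_ (by positivity)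
      calc |g (k+2) - g (k+1)| ≤ |g (k+2)| + |g (k+1)| := abs_sub _ _
        _ ≤ 2*C := by linarith [hg (k+2), hg (k+1)]
    have hAle : |(1 - p) * (r + lam * p / (1 - p) + (k : ℝ)) * g (k + 1) - (k : ℝ) * g k -
          lam * (1 - p) * (g (k + 2) - g (k + 1))| ≤ a + b * (k:ℝ) := by
      calc |(1 - p) * (r + lam * p / (1 - p) + (k : ℝ)) * g (k + 1) - (k : ℝ) * g k -
          lam * (1 - p) * (g (k + 2) - g (k + 1))|
          ≤ |(1 - p) * (r + lam * p / (1 - p) + (k : ℝ)) * g (k + 1) - (k : ℝ) * g k|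
            + |lam * (1 - p) * (g (k + 2) - g (k + 1))| := abs_sub _ _
        _ ≤ |(1 - p) * (r + lam * p / (1 - p) + (k : ℝ)) * g (k + 1)| + |(k : ℝ) * g k|
            + |lam * (1 - p) * (g (k + 2) - g (k + 1))| := by
              linarith [abs_sub ((1 - p) * (r + lam * p / (1 - p) + (k : ℝ)) * g (k + 1))
                ((k : ℝ) * g k)]
        _ ≤ a + b * (k:ℝ) := by rw [hadef, hbdef]; nlinarith [h1, h2, h3]
    calc |f k| = μ k * |(1 - p) * (r + lam * p / (1 - p) + (k : ℝ)) * g (k + 1) - (k : ℝ) * g k -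
          lam * (1 - p) * (g (k + 2) - g (k + 1))| := by
            rw [hfdef]; simp only; rw [abs_mul, ← hμdef, abs_of_nonneg hμk]
      _ ≤ μ k * (a + b * (k:ℝ)) := mul_le_mul_of_nonneg_left hAle hμk
      _ = a * μ k + b * ((k:ℝ) * μ k) := by ring
  have hsum : Summable f := by
    refine Summable.of_abs (Summable.of_nonneg_of_le (fun k => abs_nonneg _) habs ?_)
    exact ((mu_summable hr hp0 hp1).mul_left a).add
      ((mu_mul_summable hr hp0 hp1).mul_left b)
  -- the telescoped partial sums
  set w : ℕ → ℝ := fun N => if N = 0 then 0 else μ (N-1) with hwdef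
  set B : ℕ → ℝ := fun N => ((1-p)*(r+(N:ℝ))+lam) * μ N * g (N+1)
      - lam*(1-p) * μ N * g (N+2) - lam*(1-p) * w N * g (N+1) with hBdef
  have hpart : ∀ N : ℕ, ∑ k ∈ Finset.range (N+1), f k = B N := by
    intro N
    induction N with
    | zero =>
      rw [Finset.sum_range_one]
      simp only [hfdef, hBdef, hwdef, if_pos rfl]
      push_cast
      linear_combination μ 0 * g 1 * e
    | succ N ih =>
      rw [Finset.sum_range_succ, ih]
      have hrec := mu_rec (p := p) (lam := lam) hr N
      have hw' : w N = if N = 0 then 0 else μ (N-1) := rfl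
      rw [← hμdef, ← hw'] at hrec
      simp only [hfdef, hBdef, hwdef, Nat.succ_ne_zero, if_false, Nat.add_sub_cancel,
        ← hμdef]
      push_cast at hrec ⊢
      linear_combination μ (N+1) * g (N+2) * e - g (N+1) * hrec
  -- B tends to 0
  have hμ0 : Filter.Tendsto μ Filter.atTop (nhds 0) :=
    (mu_summable hr hp0 hp1).tendsto_atTop_zero
  have hkμ0 : Filter.Tendsto (fun k : ℕ => (k:ℝ) * μ k) Filter.atTop (nhds 0) :=
    (mu_mul_summable hr hp0 hp1).tendsto_atTop_zero
  have hw0 : Filter.Tendsto w Filter.atTop (nhds 0) := by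
    refine (Filter.tendsto_add_atTop_iff_nat 1).mp ?_
    have : (fun n : ℕ => w (n+1)) = μ := by
      funext n; simp [hwdef]
    rw [this]; exact hμ0
  have hB0 : Filter.Tendsto B Filter.atTop (nhds 0) := by
    have hD : Filter.Tendsto (fun N : ℕ =>
        ((1-p)*r + lam + lam*(1-p))*C * μ N + (1-p)*C*((N:ℝ) * μ N) + lam*(1-p)*C * (w N))
        Filter.atTop (nhds 0) := by
      have := ((hμ0.const_mul (((1-p)*r + lam + lam*(1-p))*C)).add
        (hkμ0.const_mul ((1-p)*C))).add (hw0.const_mul (lam*(1-p)*C))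
      simpa only [mul_zero, add_zero] using this
    refine squeeze_zero_norm (fun N => ?_) hD
    have hμN := mu_nonneg hr hp0 hp1 hlam N
    have hwN : 0 ≤ w N := by
      rw [hwdef]; dsimp only
      split
      · exact le_refl 0
      · exact mu_nonneg hr hp0 hp1 hlam _
    have hNn : (0:ℝ) ≤ (N:ℝ) := Nat.cast_nonneg N
    have hc1 : (0:ℝ) ≤ (1-p)*(r+(N:ℝ))+lam := by nlinarith
    have t1 : |((1-p)*(r+(N:ℝ))+lam) * μ N * g (N+1)| ≤ (((1-p)*(r+(N:ℝ))+lam) * μ N) * C := by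
      rw [abs_mul, abs_of_nonneg (mul_nonneg hc1 hμN)]
      exact mul_le_mul_of_nonneg_left (hg _) (mul_nonneg hc1 hμN)
    have t2 : |lam*(1-p) * μ N * g (N+2)| ≤ (lam*(1-p) * μ N) * C := by
      rw [abs_mul, abs_of_nonneg (mul_nonneg (by positivity) hμN)]
      exact mul_le_mul_of_nonneg_left (hg _) (mul_nonneg (by positivity) hμN)
    have t3 : |lam*(1-p) * w N * g (N+1)| ≤ (lam*(1-p) * w N) * C := by
      rw [abs_mul, abs_of_nonneg (mul_nonneg (by positivity) hwN)]
      exact mul_le_mul_of_nonneg_left (hg _) (mul_nonneg (by positivity) hwN)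
    rw [Real.norm_eq_abs, hBdef]
    dsimp only
    calc |((1-p)*(r+(N:ℝ))+lam) * μ N * g (N+1) - lam*(1-p) * μ N * g (N+2)
          - lam*(1-p) * w N * g (N+1)|
        ≤ |((1-p)*(r+(N:ℝ))+lam) * μ N * g (N+1) - lam*(1-p) * μ N * g (N+2)|
          + |lam*(1-p) * w N * g (N+1)| := abs_sub _ _
      _ ≤ |((1-p)*(r+(N:ℝ))+lam) * μ N * g (N+1)| + |lam*(1-p) * μ N * g (N+2)|
          + |lam*(1-p) * w N * g (N+1)| := by
            linarith [abs_sub (((1-p)*(r+(N:ℝ))+lam) * μ N * g (N+1))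
              (lam*(1-p) * μ N * g (N+2))]
      _ ≤ ((1-p)*r + lam + lam*(1-p))*C * μ N + (1-p)*C*((N:ℝ) * μ N)
          + lam*(1-p)*C * (w N) := by nlinarith [t1, t2, t3]
  -- conclude
  have h1 : Filter.Tendsto (fun n : ℕ => ∑ k ∈ Finset.range n, f k) Filter.atTop (nhds 0) := by
    refine (Filter.tendsto_add_atTop_iff_nat 1).mp ?_
    have : (fun n : ℕ => ∑ k ∈ Finset.range (n+1), f k) = B := funext hpart
    rw [this]; exact hB0
  have h2 := hsum.hasSum.tendsto_sum_nat
  exact tendsto_nhds_unique h2 h1
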